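/- arXiv:0905.3358 — 2 statements merged into one kernel-verified Lean document; each statement's English description precedes it below -/
import Mathlib

section
/- Let X be a centered Gaussian C([0,1])-valued random variable with X(0)=0 a.s., and suppose X has derivative X' in L². Let θ>0, 1≤p≤∞ and κ≥0. If limsup_{ε→0+} |log ε|^{-θ}·(-log P(‖X'(ω,·)‖_{L²[0,1]} ≤ ε)) ≤ κ, then limsup_{ε→0+} |log ε|^{-θ}·(-log P(‖X(ω)‖_{L_p[0,1]} ≤ ε)) ≤ κ. -/
open MeasureTheory ProbabilityTheory Filter Topology Set ENNReal NNReal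

noncomputable section

/-- The interval [0,1]. -/
abbrev I01 : Set ℝ := Set.Icc 0 1

/-- The Banach space C([0,1],ℝ) of continuous functions with the sup norm. -/
abbrev PathSpace : Type := C(I01, ℝ)

instance : MeasurableSpace PathSpace := borel PathSpace

/-- `0` as an element of [0,1]. -/
def i0 : I01 := ⟨0, Set.mem_Icc.mpr ⟨le_rfl, zero_le_one⟩⟩

/-- minus-log, valued in [0,∞] (equal to ∞ at 0). -/
def negLog (x : ℝ≥0∞) : ℝ≥0∞ :=
  if x = 0 then ⊤ else ENNReal.ofReal (-Real.log x.toReal)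

/-- The L_p-norm of a path, w.r.t. Lebesgue measure on [0,1] (ess-sup norm for p = ∞,
which agrees with the sup norm for continuous functions). -/
def pathLpNorm (p : ℝ≥0∞) (x : PathSpace) : ℝ≥0∞ :=
  eLpNorm (fun t : I01 => x t) p volume

/-- The L²[0,1]-norm of a function on ℝ. -/
def l2Norm (f : ℝ → ℝ) : ℝ≥0∞ := eLpNorm f 2 (volume.restrict I01)

/-- `X` is a centered Gaussian `C([0,1])`-valued random variable with `X(0) = 0` a.s.:
`X` is measurable, every continuous linear functional of `X` has a centered Gaussian
distribution, and `X(0) = 0` almost surely. -/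
def IsCenteredGaussianPath {Ω : Type*} [MeasurableSpace Ω] (P : Measure Ω)
    (X : Ω → PathSpace) : Prop :=
  Measurable X ∧ (∀ᵐ ω ∂P, X ω i0 = 0) ∧
    ∀ L : PathSpace →L[ℝ] ℝ, ∃ v : ℝ≥0,
      Measure.map (fun ω => L (X ω)) P = gaussianReal 0 v

/-- `X` has derivative `X'` in L²: `X'` is jointly measurable, `X'(ω,·) ∈ L²[0,1]` for
a.e. `ω`, and almost surely `X(ω)(t) = ∫₀ᵗ X'(ω,s) ds` for all `t ∈ [0,1]`. -/
def HasL2Derivative {Ω : Type*} [MeasurableSpace Ω] (P : Measure Ω)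
    (X : Ω → PathSpace) (X' : Ω → ℝ → ℝ) : Prop :=
  Measurable (Function.uncurry X') ∧
    (∀ᵐ ω ∂P, MemLp (X' ω) 2 (volume.restrict I01)) ∧
    (∀ᵐ ω ∂P, ∀ t : I01, X ω t = ∫ s in (0:ℝ)..(t:ℝ), X' ω s)

/-- `X` has fractional derivative `f` of order `M` in L²: `f` is jointly measurable,
`f(ω,·) ∈ L²[0,1]` for a.e. `ω`, and almost surely
`X(ω)(t) = ∫₀ᵗ (t-s)^(M-1) f(ω,s) ds` for all `t ∈ [0,1]`. -/
def HasFracDeriv {Ω : Type*} [MeasurableSpace Ω] (P : Measure Ω)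
    (X : Ω → PathSpace) (M : ℝ) (f : Ω → ℝ → ℝ) : Prop :=
  Measurable (Function.uncurry f) ∧
    (∀ᵐ ω ∂P, MemLp (f ω) 2 (volume.restrict I01)) ∧
    (∀ᵐ ω ∂P, ∀ t : I01, X ω t = ∫ s in (0:ℝ)..(t:ℝ), ((t:ℝ) - s) ^ (M - 1) * f ω s)

/-- The η-Hölder seminorm `sup_{0 ≤ s < t ≤ 1} |x(t) - x(s)|/(t-s)^η`, valued in [0,∞]. -/
def holderNorm (η : ℝ) (x : PathSpace) : ℝ≥0∞ :=
  ⨆ (s : I01) (t : I01) (_ : (s:ℝ) < (t:ℝ)),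
    ENNReal.ofReal (|x t - x s| / ((t:ℝ) - (s:ℝ)) ^ η)



instance : IsProbabilityMeasure (volume : Measure I01) := by
  constructor
  rw [MeasureTheory.Measure.Subtype.volume_univ nullMeasurableSet_Icc, Real.volume_Icc]
  norm_num

instance : IsProbabilityMeasure (volume.restrict I01) := by
  constructor
  rw [Measure.restrict_apply_univ, Real.volume_Icc]
  norm_num

lemma negLog_antitone {x y : ℝ≥0∞} (h : x ≤ y) : negLog y ≤ negLog x := by
  unfold negLog
  rcases eq_or_ne x 0 with hx | hx
  · simp [hx]
  have hy : y ≠ 0 := fun h0 => hx (le_antisymm (h0 ▸ h) zero_le)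
  rw [if_neg hx, if_neg hy]
  rcases eq_or_ne y ⊤ with hyt | hyt
  · simp [hyt, Real.log_zero]
  apply ENNReal.ofReal_le_ofReal
  have hxt : x ≠ ⊤ := (h.trans_lt (lt_top_iff_ne_top.mpr hyt)).ne
  have hx0 : 0 < x.toReal := ENNReal.toReal_pos hx hxt
  have hlog := Real.log_le_log hx0 (ENNReal.toReal_mono hyt h)
  linarith

lemma path_le_l2 {x : PathSpace} {f : ℝ → ℝ}
    (hmem : MemLp f 2 (volume.restrict I01))
    (hrep : ∀ t : I01, x t = ∫ s in (0:ℝ)..(t:ℝ), f s) (p : ℝ≥0∞) :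
    pathLpNorm p x ≤ l2Norm f := by
  have hfin : l2Norm f ≠ ⊤ := hmem.2.ne
  set C := (l2Norm f).toReal with hC
  have hint : IntegrableOn f I01 volume := hmem.integrable one_le_two
  have hintabs : IntegrableOn (fun s => |f s|) I01 volume := hint.abs
  have h4 : ∫ s in I01, |f s| ≤ C := by
    have e1 : ENNReal.ofReal (∫ s in I01, |f s|) = eLpNorm f 1 (volume.restrict I01) := by
      rw [eLpNorm_one_eq_lintegral_enorm, ← ofReal_integral_norm_eq_lintegral_enorm hint]
      simp [Real.norm_eq_abs]
    have e2 : eLpNorm f 1 (volume.restrict I01) ≤ l2Norm f :=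
      eLpNorm_le_eLpNorm_of_exponent_le one_le_two hmem.1
    exact (ENNReal.ofReal_le_iff_le_toReal hfin).mp (e1 ▸ e2)
  have key : ∀ t : I01, |x t| ≤ C := by
    intro t
    obtain ⟨ht0, ht1⟩ := t.2
    rw [hrep t]
    have h1 : |∫ s in (0:ℝ)..(t:ℝ), f s| ≤ ∫ s in (0:ℝ)..(t:ℝ), |f s| :=
      intervalIntegral.abs_integral_le_integral_abs ht0
    have h2 : ∫ s in (0:ℝ)..(t:ℝ), |f s| = ∫ s in Set.Ioc 0 (t:ℝ), |f s| :=
      intervalIntegral.integral_of_le ht0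
    have h3 : ∫ s in Set.Ioc 0 (t:ℝ), |f s| ≤ ∫ s in I01, |f s| := by
      apply setIntegral_mono_set hintabs
      · exact Filter.Eventually.of_forall fun s => abs_nonneg _
      · exact ((Set.Ioc_subset_Icc_self).trans (Set.Icc_subset_Icc le_rfl ht1)).eventuallyLE
    linarith
  have hsup : pathLpNorm ⊤ x ≤ l2Norm f := by
    rw [pathLpNorm, eLpNorm_exponent_top]
    calc eLpNormEssSup (fun t : I01 => x t) volume ≤ ENNReal.ofReal C :=
          eLpNormEssSup_le_of_ae_bound
            (Filter.Eventually.of_forall fun t => by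
              simpa [Real.norm_eq_abs] using key t)
      _ = l2Norm f := ENNReal.ofReal_toReal hfin
  calc pathLpNorm p x ≤ pathLpNorm ⊤ x :=
        eLpNorm_le_eLpNorm_of_exponent_le le_top x.continuous.aestronglyMeasurable
    _ ≤ l2Norm f := hsup

/-- (case `τ = ∞`) If `X` is a centered Gaussian path with derivative `X'`
in L², `θ > 0`, `1 ≤ p ≤ ∞`, `κ ≥ 0`, and
`limsup_{ε→0+} |log ε|^(-θ) (-log P(‖X'(ω,·)‖_{L²} ≤ ε)) ≤ κ`, then
`limsup_{ε→0+} |log ε|^(-θ) (-log P(‖X(ω)‖_{L_p} ≤ ε)) ≤ κ`. -/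
theorem small_deviation_transfer_log_case
    {Ω : Type*} [MeasurableSpace Ω] (P : Measure Ω) [IsProbabilityMeasure P]
    (X : Ω → PathSpace) (X' : Ω → ℝ → ℝ)
    (hX : IsCenteredGaussianPath P X) (hX' : HasL2Derivative P X X')
    (θ : ℝ) (hθ : 0 < θ) (p : ℝ≥0∞) (hp : 1 ≤ p) (κ : ℝ) (hκ : 0 ≤ κ)
    (h : Filter.limsup (fun ε : ℝ =>
        ENNReal.ofReal (|Real.log ε| ^ (-θ)) *
          negLog (P {ω | l2Norm (X' ω) ≤ ENNReal.ofReal ε})) (𝓝[>] (0:ℝ))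
      ≤ ENNReal.ofReal κ) :
    Filter.limsup (fun ε : ℝ =>
        ENNReal.ofReal (|Real.log ε| ^ (-θ)) *
          negLog (P {ω | pathLpNorm p (X ω) ≤ ENNReal.ofReal ε})) (𝓝[>] (0:ℝ))
      ≤ ENNReal.ofReal κ := by
  obtain ⟨-, hmem, hrep⟩ := hX'
  have hae : ∀ᵐ ω ∂P, pathLpNorm p (X ω) ≤ l2Norm (X' ω) := by
    filter_upwards [hmem, hrep] with ω h1 h2
    exact path_le_l2 h1 h2 p
  refine le_trans (Filter.limsup_le_limsup (Filter.Eventually.of_forall fun ε => ?_)) h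
  apply mul_le_mul_right
  apply negLog_antitone
  apply measure_mono_ae
  filter_upwards [hae] with ω hω hmemset
  exact le_trans hω hmemset

end
end

section
/- Let V be a nonnegative random variable, and let a>0, θ∈ℝ, κ≥0. If limsup_{ε→0+} ε^{a}·|log ε|^{-θ}·(-log P(V ≤ ε)) ≤ κ, then there exists a finite constant K (depending only on κ, a, θ) such that limsup_{μ→∞} μ^{-a/(1+a)}·(log μ)^{-θ/(1+a)}·(-log E[exp(-μ·V)]) ≤ K. -/
open MeasureTheory Filter Topology ENNReal

noncomputable section

lemma negLog_antitone_s12 : Antitone negLog := by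
  intro x y hxy
  unfold negLog
  by_cases hx : x = 0
  · simp [hx]
  · have hy : y ≠ 0 := fun h => hx (le_antisymm (h ▸ hxy) zero_le)
    rw [if_neg hx, if_neg hy]
    by_cases hytop : y = ⊤
    · simp [hytop]
    · have hxtop : x ≠ ⊤ := fun h => hytop (top_le_iff.1 (h ▸ hxy))
      have h1 : 0 < x.toReal := ENNReal.toReal_pos hx hxtop
      have h2 : x.toReal ≤ y.toReal := ENNReal.toReal_le_toReal hxtop hytop |>.2 hxy
      exact ENNReal.ofReal_le_ofReal (neg_le_neg (Real.log_le_log h1 h2))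

lemma negLog_mul_exp_le (t : ℝ) (p : ℝ≥0∞) (hp : p ≠ ⊤) :
    negLog (ENNReal.ofReal (Real.exp (-t)) * p) ≤ ENNReal.ofReal t + negLog p := by
  by_cases hp0 : p = 0
  · simp [negLog, hp0]
  · have he : ENNReal.ofReal (Real.exp (-t)) ≠ 0 := by
      simp [ENNReal.ofReal_eq_zero, not_le, Real.exp_pos]
    have hm : ENNReal.ofReal (Real.exp (-t)) * p ≠ 0 := mul_ne_zero he hp0
    unfold negLog
    rw [if_neg hm, if_neg hp0]
    have hptr : 0 < p.toReal := ENNReal.toReal_pos hp0 hp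
    rw [ENNReal.toReal_mul, ENNReal.toReal_ofReal (Real.exp_nonneg _),
      Real.log_mul (Real.exp_ne_zero _) (ne_of_gt hptr), Real.log_exp]
    have : -(-t + Real.log p.toReal) = t + -Real.log p.toReal := by ring
    rw [this]
    exact ENNReal.ofReal_add_le

lemma lintegral_exp_ge {Ω : Type} [MeasurableSpace Ω] (P : Measure Ω)
    (V : Ω → ℝ) (hV : Measurable V) (μ ε : ℝ) (hμ : 0 ≤ μ) :
    ENNReal.ofReal (Real.exp (-(μ * ε))) * P {ω | V ω ≤ ε} ≤
      ∫⁻ ω, ENNReal.ofReal (Real.exp (-(μ * V ω))) ∂P := by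
  have hs : MeasurableSet {ω | V ω ≤ ε} := measurableSet_le hV measurable_const
  calc ENNReal.ofReal (Real.exp (-(μ * ε))) * P {ω | V ω ≤ ε}
      = ∫⁻ _ω in {ω | V ω ≤ ε}, ENNReal.ofReal (Real.exp (-(μ * ε))) ∂P := by
        rw [setLIntegral_const]
    _ ≤ ∫⁻ ω in {ω | V ω ≤ ε}, ENNReal.ofReal (Real.exp (-(μ * V ω))) ∂P := by
        refine setLIntegral_mono (by fun_prop) (fun ω hω => ?_)
        exact ENNReal.ofReal_le_ofReal (Real.exp_le_exp.2
          (neg_le_neg (mul_le_mul_of_nonneg_left hω hμ)))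
    _ ≤ ∫⁻ ω, ENNReal.ofReal (Real.exp (-(μ * V ω))) ∂P := setLIntegral_le_lintegral _ _

lemma tendsto_loglog_div_log :
    Tendsto (fun μ : ℝ => Real.log (Real.log μ) / Real.log μ) atTop (𝓝 0) :=
  (Real.isLittleO_log_id_atTop.tendsto_div_nhds_zero).comp Real.tendsto_log_atTop

set_option maxHeartbeats 2000000

/-- (de Bruijn Tauberian direction) Let `V ≥ 0` be a random variable,
`a > 0`, `θ ∈ ℝ`, `κ ≥ 0`. If `limsup_{ε→0+} ε^a |log ε|^(-θ) (-log P(V ≤ ε)) ≤ κ`, then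
there is a finite constant `K = K(κ,a,θ)` with
`limsup_{μ→∞} μ^(-a/(1+a)) (log μ)^(-θ/(1+a)) (-log E[exp(-μV)]) ≤ K`. -/
theorem de_bruijn_upper_direction (a θ κ : ℝ) (ha : 0 < a) (hκ : 0 ≤ κ) :
    ∃ K : ℝ, ∀ (Ω : Type) [MeasurableSpace Ω] (P : Measure Ω) [IsProbabilityMeasure P]
      (V : Ω → ℝ), Measurable V → (∀ ω, 0 ≤ V ω) →
      (Filter.limsup (fun ε : ℝ =>
          ENNReal.ofReal (ε ^ a * |Real.log ε| ^ (-θ)) *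
            negLog (P {ω | V ω ≤ ε})) (𝓝[>] (0:ℝ)) ≤ ENNReal.ofReal κ) →
      Filter.limsup (fun μ : ℝ =>
          ENNReal.ofReal (μ ^ (-(a/(1+a))) * Real.log μ ^ (-(θ/(1+a)))) *
            negLog (∫⁻ ω, ENNReal.ofReal (Real.exp (-(μ * V ω))) ∂P)) Filter.atTop
        ≤ ENNReal.ofReal K := by
  have hab : (0:ℝ) < 1 + a := by linarith
  set b : ℝ := 1/(1+a) with hb
  have hb0 : 0 < b := by positivity
  have hb1 : b * (1 + a) = 1 := by rw [hb]; field_simp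
  refine ⟨1 + (κ+1) * (1 + (b/2) ^ θ), ?_⟩
  intro Ω _ P _ V hV hV0 hlim
  -- eventual bound from the hypothesis
  have h1 : ∀ᶠ ε in 𝓝[>] (0:ℝ),
      ENNReal.ofReal (ε ^ a * |Real.log ε| ^ (-θ)) * negLog (P {ω | V ω ≤ ε})
        ≤ ENNReal.ofReal (κ+1) := by
    have hlt : ENNReal.ofReal κ < ENNReal.ofReal (κ+1) :=
      (ENNReal.ofReal_lt_ofReal_iff (by linarith)).2 (by linarith)
    exact (Filter.eventually_lt_of_limsup_lt (lt_of_le_of_lt hlim hlt)).mono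
      fun ε h => h.le
  obtain ⟨u, hu, hsub⟩ := mem_nhdsGT_iff_exists_Ioo_subset.1 h1
  set δ : ℝ := min u (1/2) with hδ
  have hδ0 : 0 < δ := lt_min hu (by norm_num)
  have hδhalf : δ ≤ 1/2 := min_le_right _ _
  -- pointwise bound on negLog of probability
  have hPbound : ∀ ε : ℝ, 0 < ε → ε < δ →
      negLog (P {ω | V ω ≤ ε}) ≤
        ENNReal.ofReal ((κ+1) * (ε ^ (-a) * |Real.log ε| ^ θ)) := by
    intro ε hε hεδ
    have hε1 : ε < 1 := lt_of_lt_of_le hεδ (hδhalf.trans (by norm_num))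
    have hlogneg : Real.log ε < 0 := Real.log_neg hε hε1
    have habs : 0 < |Real.log ε| := abs_pos.2 (ne_of_lt hlogneg)
    have hc : 0 < ε ^ a * |Real.log ε| ^ (-θ) :=
      mul_pos (Real.rpow_pos_of_pos hε a) (Real.rpow_pos_of_pos habs (-θ))
    have hεu : ε ∈ Set.Ioo (0:ℝ) u := ⟨hε, lt_of_lt_of_le hεδ (min_le_left _ _)⟩
    have h := hsub hεu
    simp only [Set.mem_setOf_eq] at h
    have h2 : negLog (P {ω | V ω ≤ ε}) ≤
        ENNReal.ofReal (κ+1) / ENNReal.ofReal (ε ^ a * |Real.log ε| ^ (-θ)) := by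
      rw [ENNReal.le_div_iff_mul_le (Or.inl (ENNReal.ofReal_pos.2 hc).ne')
        (Or.inl ENNReal.ofReal_ne_top)]
      rw [mul_comm]; exact h
    rw [← ENNReal.ofReal_div_of_pos hc] at h2
    refine h2.trans (le_of_eq (congrArg _ ?_))
    rw [Real.rpow_neg hε.le, Real.rpow_neg (abs_nonneg _), div_eq_mul_inv, mul_inv, inv_inv]
  -- eventual facts about μ
  have hev : ∀ᶠ μ : ℝ in atTop,
      Real.exp 1 ≤ μ ∧ |θ| * Real.log (Real.log μ) ≤ (1/2) * Real.log μ ∧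
        μ ^ (-(b/2)) < δ := by
    have e1 : ∀ᶠ μ : ℝ in atTop, Real.exp 1 ≤ μ := eventually_ge_atTop _
    have e3 : ∀ᶠ μ : ℝ in atTop, μ ^ (-(b/2)) < δ :=
      (tendsto_rpow_neg_atTop (by positivity)).eventually (gt_mem_nhds hδ0)
    have e2 : ∀ᶠ μ : ℝ in atTop, |θ| * Real.log (Real.log μ) ≤ (1/2) * Real.log μ := by
      have hpos : (0:ℝ) < 1/(2*(|θ|+1)) := by positivity
      filter_upwards [tendsto_loglog_div_log.eventually (gt_mem_nhds hpos),
        Real.tendsto_log_atTop.eventually_ge_atTop 1] with μ hr hl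
      have hlpos : (0:ℝ) < Real.log μ := lt_of_lt_of_le one_pos hl
      rw [div_lt_iff₀ hlpos] at hr
      have h5 : |θ| * Real.log (Real.log μ) ≤ |θ| * (1/(2*(|θ|+1)) * Real.log μ) :=
        mul_le_mul_of_nonneg_left hr.le (abs_nonneg θ)
      have h6 : |θ| * (1/(2*(|θ|+1)) * Real.log μ) ≤ (1/2) * Real.log μ := by
        rw [← mul_assoc]
        apply mul_le_mul_of_nonneg_right _ hlpos.le
        rw [mul_one_div, div_le_iff₀ (by positivity)]
        nlinarith [abs_nonneg θ]
      linarith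
    filter_upwards [e1, e2, e3] with μ h1 h2 h3; exact ⟨h1, h2, h3⟩
  -- main eventual bound
  have key : ∀ᶠ μ : ℝ in atTop,
      ENNReal.ofReal (μ ^ (-(a/(1+a))) * Real.log μ ^ (-(θ/(1+a)))) *
          negLog (∫⁻ ω, ENNReal.ofReal (Real.exp (-(μ * V ω))) ∂P)
        ≤ ENNReal.ofReal (1 + (κ+1) * (1 + (b/2) ^ θ)) := by
    filter_upwards [hev] with μ ⟨hμe, hθL, hμδ⟩
    have hμ1 : (1:ℝ) < μ := lt_of_lt_of_le (by
      have := Real.exp_pos 1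
      nlinarith [Real.add_one_le_exp (1:ℝ)]) hμe
    have hμ0 : (0:ℝ) < μ := lt_trans one_pos hμ1
    set l : ℝ := Real.log μ with hl
    have hl1 : (1:ℝ) ≤ l := (Real.le_log_iff_exp_le hμ0).2 hμe
    have hl0 : (0:ℝ) < l := lt_of_lt_of_le one_pos hl1
    have hL0 : (0:ℝ) ≤ Real.log l := Real.log_nonneg hl1
    set ε : ℝ := μ ^ (-b) * l ^ (θ*b) with hε
    have hε0 : 0 < ε := mul_pos (Real.rpow_pos_of_pos hμ0 _) (Real.rpow_pos_of_pos hl0 _)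
    have hlogε : Real.log ε = (-b) * l + (θ*b) * Real.log l := by
      rw [hε, Real.log_mul (ne_of_gt (Real.rpow_pos_of_pos hμ0 _))
        (ne_of_gt (Real.rpow_pos_of_pos hl0 _)), Real.log_rpow hμ0, Real.log_rpow hl0]
    have hθLle : θ * Real.log l ≤ (1/2) * l :=
      le_trans (mul_le_mul_of_nonneg_right (le_abs_self θ) hL0) hθL
    have hlow : (b/2) * l ≤ -Real.log ε := by
      rw [hlogε]; nlinarith
    have hlogεneg : Real.log ε < 0 := by nlinarith
    have habs : |Real.log ε| = -Real.log ε := abs_of_neg hlogεneg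
    have hεδ : ε < δ := by
      have h7 : ε ≤ μ ^ (-(b/2)) := by
        rw [Real.rpow_def_of_pos hμ0, ← Real.exp_log hε0]
        exact Real.exp_le_exp.2 (by rw [← hl]; nlinarith)
      linarith
    -- assemble
    have ha' : a/(1+a) = a*b := by rw [hb]; ring
    have hθ' : θ/(1+a) = θ*b := by rw [hb]; ring
    have hble : b ≤ 1 := by rw [hb, div_le_one hab]; linarith
    rw [ha', hθ']
    set w : ℝ := μ ^ (-(a*b)) * l ^ (-(θ*b)) with hw
    have hw0 : 0 ≤ w := by positivity
    have hstep : negLog (∫⁻ ω, ENNReal.ofReal (Real.exp (-(μ * V ω))) ∂P)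
        ≤ ENNReal.ofReal (μ*ε) + ENNReal.ofReal ((κ+1) * (ε ^ (-a) * |Real.log ε| ^ θ)) := by
      refine le_trans (negLog_antitone_s12 (lintegral_exp_ge P V hV μ ε hμ0.le)) ?_
      refine le_trans (negLog_mul_exp_le (μ*ε) _ (measure_ne_top P _)) ?_
      exact add_le_add_right (hPbound ε hε0 hεδ) _
    have id1 : w * (μ * ε) = 1 := by
      have h8 : w * (μ * ε) =
          (μ ^ (-(a*b)) * μ ^ (1:ℝ) * μ ^ (-b)) * (l ^ (-(θ*b)) * l ^ (θ*b)) := by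
        rw [hw, hε, Real.rpow_one]; ring
      rw [h8, ← Real.rpow_add hμ0, ← Real.rpow_add hμ0, ← Real.rpow_add hl0,
        show -(a*b) + 1 + -b = 0 from by linear_combination -hb1,
        show -(θ*b) + θ*b = 0 from by ring, Real.rpow_zero, Real.rpow_zero, mul_one]
    have hεpow : ε ^ (-a) = μ ^ (a*b) * l ^ (-(θ*b*a)) := by
      rw [hε, Real.mul_rpow (Real.rpow_nonneg hμ0.le _) (Real.rpow_nonneg hl0.le _),
        ← Real.rpow_mul hμ0.le, ← Real.rpow_mul hl0.le,
        show (-b)*(-a) = a*b from by ring, show (θ*b)*(-a) = -(θ*b*a) from by ring]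
    have id2 : w * ((κ+1) * (ε ^ (-a) * |Real.log ε| ^ θ)) =
        (κ+1) * (l ^ (-θ) * |Real.log ε| ^ θ) := by
      rw [hw, hεpow]
      have hμc : μ ^ (-(a*b)) * μ ^ (a*b) = 1 := by
        rw [← Real.rpow_add hμ0, neg_add_cancel, Real.rpow_zero]
      have hlc : l ^ (-(θ*b)) * l ^ (-(θ*b*a)) = l ^ (-θ) := by
        rw [← Real.rpow_add hl0]; congr 1; linear_combination -θ * hb1
      calc μ ^ (-(a*b)) * l ^ (-(θ*b)) *
            ((κ+1) * (μ ^ (a*b) * l ^ (-(θ*b*a)) * |Real.log ε| ^ θ))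
          = (κ+1) * ((μ ^ (-(a*b)) * μ ^ (a*b)) *
              ((l ^ (-(θ*b)) * l ^ (-(θ*b*a))) * |Real.log ε| ^ θ)) := by ring
        _ = (κ+1) * (l ^ (-θ) * |Real.log ε| ^ θ) := by rw [hμc, hlc]; ring
    have hll : l ^ (-θ) * l ^ θ = 1 := by
      rw [← Real.rpow_add hl0, neg_add_cancel, Real.rpow_zero]
    have hbl : 0 < (b/2) * l := by positivity
    have bound3 : l ^ (-θ) * |Real.log ε| ^ θ ≤ 1 + (b/2) ^ θ := by
      rcases le_or_gt 0 θ with hθ0 | hθ0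
      · have hup : |Real.log ε| ≤ l := by
          rw [habs, hlogε]
          nlinarith [mul_nonneg (mul_nonneg hθ0 hb0.le) hL0,
            mul_nonneg (sub_nonneg.2 hble) hl0.le]
        have h9 : |Real.log ε| ^ θ ≤ l ^ θ := Real.rpow_le_rpow (abs_nonneg _) hup hθ0
        calc l ^ (-θ) * |Real.log ε| ^ θ ≤ l ^ (-θ) * l ^ θ :=
              mul_le_mul_of_nonneg_left h9 (Real.rpow_nonneg hl0.le _)
          _ = 1 := hll
          _ ≤ 1 + (b/2) ^ θ := le_add_of_nonneg_right (Real.rpow_nonneg (by positivity) _)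
      · have h9 : |Real.log ε| ^ θ ≤ ((b/2)*l) ^ θ := by
          rw [habs]
          exact Real.rpow_le_rpow_of_nonpos hbl hlow hθ0.le
        have h10 : ((b/2)*l) ^ θ = (b/2) ^ θ * l ^ θ := Real.mul_rpow (by positivity) hl0.le
        calc l ^ (-θ) * |Real.log ε| ^ θ ≤ l ^ (-θ) * ((b/2) ^ θ * l ^ θ) :=
              mul_le_mul_of_nonneg_left (h9.trans_eq h10) (Real.rpow_nonneg hl0.le _)
          _ = (b/2) ^ θ * (l ^ (-θ) * l ^ θ) := by ring
          _ = (b/2) ^ θ := by rw [hll, mul_one]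
          _ ≤ 1 + (b/2) ^ θ := by linarith
    have bound2 : w * ((κ+1) * (ε ^ (-a) * |Real.log ε| ^ θ)) ≤ (κ+1) * (1 + (b/2) ^ θ) := by
      rw [id2]
      exact mul_le_mul_of_nonneg_left bound3 (by linarith)
    calc ENNReal.ofReal w * negLog (∫⁻ ω, ENNReal.ofReal (Real.exp (-(μ * V ω))) ∂P)
        ≤ ENNReal.ofReal w * (ENNReal.ofReal (μ*ε) +
            ENNReal.ofReal ((κ+1) * (ε ^ (-a) * |Real.log ε| ^ θ))) :=
          mul_le_mul_right hstep _
      _ = ENNReal.ofReal (w * (μ*ε)) +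
            ENNReal.ofReal (w * ((κ+1) * (ε ^ (-a) * |Real.log ε| ^ θ))) := by
          rw [mul_add, ← ENNReal.ofReal_mul hw0, ← ENNReal.ofReal_mul hw0]
      _ ≤ ENNReal.ofReal 1 + ENNReal.ofReal ((κ+1) * (1 + (b/2) ^ θ)) := by
          rw [id1]
          exact add_le_add_right (ENNReal.ofReal_le_ofReal bound2) _
      _ = ENNReal.ofReal (1 + (κ+1) * (1 + (b/2) ^ θ)) := by
          rw [← ENNReal.ofReal_add (by norm_num)
            (by nlinarith [Real.rpow_nonneg (by positivity : (0:ℝ) ≤ b/2) θ])]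
  exact Filter.limsup_le_of_le (by isBoundedDefault) key

end
end
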